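/- The sequence of derivatives (φₙ′) converges uniformly on [0, ε*]; consequently the uniform limit φ of (φₙ) is continuously differentiable on [0, ε*], φ′ is the uniform limit of (φₙ′), and φ′(0) = 1. -/

import Mathlib

/-- Under the standing hypotheses, the derivatives `φₙ′` of the rescaled
iterates `φₙ(x) = f⁽ⁿ⁾(x)/aⁿ` converge uniformly on `[0,ε*]`; consequently the uniform
limit `φ` of `(φₙ)` is continuously differentiable on `[0,ε*]`, `φ′` is the uniform limit of
`(φₙ′)`, and `φ′(0) = 1`. -/
theorem rescaled_iterates_deriv_converge (a δ C εs : ℝ) (f : ℝ → ℝ)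
    (ha0 : 0 < a) (ha1 : a < 1) (hδ : 0 < δ) (hC : 0 < C) (hεs : 0 < εs)
    (hsmall : a * (1 + δ) ^ 2 < 1)
    (hf : ContDiffOn ℝ 2 f (Set.Icc 0 εs))
    (hf0 : f 0 = 0)
    (hf'0 : derivWithin f (Set.Icc 0 εs) 0 = a)
    (hf'' : ∀ x ∈ Set.Icc 0 εs,
      |derivWithin (derivWithin f (Set.Icc 0 εs)) (Set.Icc 0 εs) x| ≤ C)
    (hf1 : ∀ x ∈ Set.Icc 0 εs, 0 ≤ f x ∧ f x ≤ (1 + δ) * a * x)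
    (hf2 : ∀ x ∈ Set.Icc 0 εs, |f x - a * x| ≤ C * x ^ 2) :
    ∃ φ ψ : ℝ → ℝ,
      TendstoUniformlyOn (fun n x => f^[n] x / a ^ n) φ Filter.atTop (Set.Icc 0 εs) ∧
      TendstoUniformlyOn
        (fun n x => derivWithin (fun y => f^[n] y / a ^ n) (Set.Icc 0 εs) x) ψ
        Filter.atTop (Set.Icc 0 εs) ∧
      ContDiffOn ℝ 1 φ (Set.Icc 0 εs) ∧
      (∀ x ∈ Set.Icc 0 εs, derivWithin φ (Set.Icc 0 εs) x = ψ x) ∧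
      ψ 0 = 1 := by
  classical
  set S : Set ℝ := Set.Icc 0 εs with hSdef
  have h0S : (0:ℝ) ∈ S := ⟨le_refl 0, hεs.le⟩
  have hu : UniqueDiffOn ℝ S := uniqueDiffOn_Icc hεs
  set r : ℝ := a * (1 + δ) with hrdef
  have hr0 : 0 < r := by positivity
  have hr1 : r < 1 := by nlinarith
  set s' : ℝ := a * (1 + δ) ^ 2 with hs'def
  have hs0 : 0 ≤ s' := by positivity
  -- f maps S into S
  have hmaps : ∀ x ∈ S, f x ∈ S := by
    intro x hx
    obtain ⟨h1, h2⟩ := hf1 x hx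
    refine ⟨h1, ?_⟩
    have hx0 : 0 ≤ x := hx.1
    have hx1 : x ≤ εs := hx.2
    nlinarith
  -- iterates stay in S and decay geometrically
  have hiter : ∀ n : ℕ, ∀ x ∈ S, f^[n] x ∈ S ∧ f^[n] x ≤ r ^ n * x := by
    intro n
    induction n with
    | zero => intro x hx; simpa using hx
    | succ n ih =>
      intro x hx
      obtain ⟨hmem, hle⟩ := ih x hx
      rw [Function.iterate_succ_apply']
      refine ⟨hmaps _ hmem, ?_⟩
      have h2 := (hf1 _ hmem).2
      have : f (f^[n] x) ≤ r * f^[n] x := by rw [hrdef]; nlinarith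
      calc f (f^[n] x) ≤ r * f^[n] x := this
        _ ≤ r * (r ^ n * x) := by
            exact mul_le_mul_of_nonneg_left hle hr0.le
        _ = r ^ (n+1) * x := by ring
  have hiterS : ∀ n : ℕ, ∀ x ∈ S, f^[n] x ∈ S := fun n x hx => (hiter n x hx).1
  have hiterE : ∀ n : ℕ, ∀ x ∈ S, f^[n] x ≤ r ^ n * εs := by
    intro n x hx
    calc f^[n] x ≤ r ^ n * x := (hiter n x hx).2
      _ ≤ r ^ n * εs := mul_le_mul_of_nonneg_left hx.2 (pow_nonneg hr0.le n)
  set g : ℝ → ℝ := derivWithin f S with hgdef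
  have hf' : DifferentiableOn ℝ f S := hf.differentiableOn (by norm_num)
  have hgC : ContDiffOn ℝ 1 g S := hf.derivWithin hu (by norm_num)
  have hgd : DifferentiableOn ℝ g S := hgC.differentiableOn one_ne_zero
  have hgcont : ContinuousOn g S := hgd.continuousOn
  have hglip : ∀ y ∈ S, |g y - a| ≤ C * y := by
    intro y hy
    have hb : ∀ x ∈ S, ‖derivWithin g S x‖ ≤ C := by
      intro x hx; rw [Real.norm_eq_abs]; exact hf'' x hx
    have this1 := (convex_Icc (0:ℝ) εs).norm_image_sub_le_of_norm_derivWithin_le hgd hb h0S hy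
    rw [hf'0] at this1
    simpa [Real.norm_eq_abs, abs_of_nonneg hy.1] using this1
  have hfderiv : ∀ y ∈ S, HasDerivWithinAt f (g y) S y := fun y hy =>
    (hf' y hy).hasDerivWithinAt
  set G : ℕ → ℝ → ℝ := fun n x => ∏ k ∈ Finset.range n, g (f^[k] x) with hGdef
  have hGd : ∀ n : ℕ, ∀ x ∈ S, HasDerivWithinAt (f^[n]) (G n x) S x := by
    intro n
    induction n with
    | zero =>
      intro x hx
      simpa [hGdef] using hasDerivWithinAt_id x S
    | succ n ih =>
      intro x hx
      have hy := hiterS n x hx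
      have h1 := hfderiv _ hy
      have h2 := ih x hx
      have h3 := HasDerivWithinAt.comp x h1 h2 (fun z hz => hiterS n z hz)
      have h4 : G (n+1) x = g (f^[n] x) * G n x := by
        simp only [hGdef]
        rw [Finset.prod_range_succ]; ring
      rw [Function.iterate_succ']
      rw [h4]
      exact h3
  have hφderiv : ∀ n : ℕ, ∀ x ∈ S, HasDerivWithinAt (fun y => f^[n] y / a ^ n)
      (G n x / a ^ n) S x := fun n x hx => (hGd n x hx).div_const _
  have hdW : ∀ n : ℕ, ∀ x ∈ S, derivWithin (fun y => f^[n] y / a ^ n) S x = G n x / a ^ n :=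
    fun n x hx => (hφderiv n x hx).derivWithin (hu x hx)
  -- geometric sum bound
  have hgeom : ∀ n : ℕ, (∑ k ∈ Finset.range n, r ^ k) ≤ (1 - r)⁻¹ := by
    intro n
    have h1r : (0:ℝ) < 1 - r := by linarith
    have key : (∑ k ∈ Finset.range n, r ^ k) * (1 - r) = 1 - r ^ n := by
      have := geom_sum_mul r n
      linear_combination -this
    rw [inv_eq_one_div, le_div_iff₀ h1r, key]
    nlinarith [pow_nonneg hr0.le n]
  set M : ℝ := Real.exp (C * εs / (a * (1 - r))) with hMdef
  have hM0 : 0 < M := Real.exp_pos _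
  have hGb : ∀ n : ℕ, ∀ x ∈ S, |G n x| ≤ a ^ n * M := by
    intro n x hx
    have step : ∀ k ∈ Finset.range n, |g (f^[k] x)| ≤ a * Real.exp (C * εs / a * r ^ k) := by
      intro k _
      have hyS := hiterS k x hx
      have hyE := hiterE k x hx
      have h1 : |g (f^[k] x)| ≤ a + C * f^[k] x := by
        have := hglip _ hyS
        have := abs_abs (g (f^[k] x))
        calc |g (f^[k] x)| = |a + (g (f^[k] x) - a)| := by congr 1; ring
          _ ≤ |a| + |g (f^[k] x) - a| := abs_add_le _ _
          _ ≤ a + C * f^[k] x := by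
              rw [abs_of_nonneg ha0.le]
              exact add_le_add_right (hglip _ hyS) a
      have h2 : a + C * f^[k] x ≤ a + C * εs * r ^ k := by
        have : C * f^[k] x ≤ C * (r ^ k * εs) := mul_le_mul_of_nonneg_left hyE hC.le
        nlinarith
      have h3 : a + C * εs * r ^ k = a * (1 + C * εs / a * r ^ k) := by
        field_simp
      have h4 : (1 : ℝ) + C * εs / a * r ^ k ≤ Real.exp (C * εs / a * r ^ k) := by
        have := Real.add_one_le_exp (C * εs / a * r ^ k)
        linarith
      calc |g (f^[k] x)| ≤ a + C * εs * r ^ k := le_trans h1 h2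
        _ = a * (1 + C * εs / a * r ^ k) := h3
        _ ≤ a * Real.exp (C * εs / a * r ^ k) := mul_le_mul_of_nonneg_left h4 ha0.le
    calc |G n x| = ∏ k ∈ Finset.range n, |g (f^[k] x)| := Finset.abs_prod _ _
      _ ≤ ∏ k ∈ Finset.range n, (a * Real.exp (C * εs / a * r ^ k)) :=
          Finset.prod_le_prod (fun k _ => abs_nonneg _) step
      _ = a ^ n * Real.exp (∑ k ∈ Finset.range n, C * εs / a * r ^ k) := by
          rw [Finset.prod_mul_distrib, Finset.prod_const, Finset.card_range, Real.exp_sum]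
      _ ≤ a ^ n * M := by
          refine mul_le_mul_of_nonneg_left ?_ (pow_nonneg ha0.le n)
          rw [hMdef]
          apply Real.exp_le_exp.mpr
          rw [← Finset.mul_sum]
          calc C * εs / a * ∑ k ∈ Finset.range n, r ^ k
              ≤ C * εs / a * (1 - r)⁻¹ := by
                refine mul_le_mul_of_nonneg_left (hgeom n) (by positivity)
            _ = C * εs / (a * (1 - r)) := by
                have h1r : (0:ℝ) < 1 - r := by linarith
                field_simp
  -- difference bounds
  set K : ℝ := M * C * εs / a with hKdef
  set Kφ : ℝ := C * εs ^ 2 / a with hKφdef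
  set D : ℕ → ℝ → ℝ := fun n x =>
    derivWithin (fun y => f^[n+1] y / a ^ (n+1)) S x -
      derivWithin (fun y => f^[n] y / a ^ n) S x with hDdef
  set Dφ : ℕ → ℝ → ℝ := fun n x => f^[n+1] x / a ^ (n+1) - f^[n] x / a ^ n with hDφdef
  have hDb : ∀ (n : ℕ) (x : ℝ), x ∈ S → ‖D n x‖ ≤ K * r ^ n := by
    intro n x hx
    have hyS := hiterS n x hx
    have hyE := hiterE n x hx
    have hGsucc : G (n+1) x = G n x * g (f^[n] x) := by
      simp only [hGdef]
      rw [Finset.prod_range_succ]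
    have expr : D n x = (G n x / a ^ n) * ((g (f^[n] x) - a) / a) := by
      simp only [hDdef]
      rw [hdW (n+1) x hx, hdW n x hx, hGsucc]
      have han : (a:ℝ) ^ n ≠ 0 := (pow_pos ha0 n).ne'
      field_simp
      ring
    rw [Real.norm_eq_abs, expr, abs_mul]
    have h1 : |G n x / a ^ n| ≤ M := by
      rw [abs_div, abs_of_nonneg (pow_nonneg ha0.le n)]
      rw [div_le_iff₀ (pow_pos ha0 n)]
      calc |G n x| ≤ a ^ n * M := hGb n x hx
        _ = M * a ^ n := by ring
    have h2 : |(g (f^[n] x) - a) / a| ≤ C * εs * r ^ n / a := by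
      rw [abs_div, abs_of_nonneg ha0.le]
      have hnum : |g (f^[n] x) - a| ≤ C * εs * r ^ n := by
        calc |g (f^[n] x) - a| ≤ C * f^[n] x := hglip _ hyS
          _ ≤ C * (r ^ n * εs) := mul_le_mul_of_nonneg_left hyE hC.le
          _ = C * εs * r ^ n := by ring
      exact (div_le_div_iff_of_pos_right ha0).mpr hnum
    calc |G n x / a ^ n| * |(g (f^[n] x) - a) / a|
        ≤ M * (C * εs * r ^ n / a) :=
          mul_le_mul h1 h2 (abs_nonneg _) hM0.le
      _ = K * r ^ n := by rw [hKdef]; field_simp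
  have hDφb : ∀ (n : ℕ) (x : ℝ), x ∈ S → ‖Dφ n x‖ ≤ Kφ * s' ^ n := by
    intro n x hx
    have hyS := hiterS n x hx
    have hyE := hiterE n x hx
    have hy0 : 0 ≤ f^[n] x := hyS.1
    have expr : Dφ n x = (f (f^[n] x) - a * f^[n] x) / a ^ (n+1) := by
      simp only [hDφdef]
      rw [Function.iterate_succ_apply']
      have han : (a:ℝ) ^ n ≠ 0 := (pow_pos ha0 n).ne'
      field_simp
      ring
    rw [Real.norm_eq_abs, expr, abs_div, abs_of_nonneg (pow_pos ha0 (n+1)).le]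
    rw [div_le_iff₀ (pow_pos ha0 (n+1))]
    have h1 : |f (f^[n] x) - a * f^[n] x| ≤ C * (f^[n] x) ^ 2 := hf2 _ hyS
    have h2 : C * (f^[n] x) ^ 2 ≤ C * (r ^ n * εs) ^ 2 := by
      apply mul_le_mul_of_nonneg_left ?_ hC.le
      exact pow_le_pow_left₀ hy0 hyE 2
    have h3 : C * (r ^ n * εs) ^ 2 = Kφ * s' ^ n * a ^ (n+1) := by
      have hrs : r ^ 2 = a * s' := by rw [hrdef, hs'def]; ring
      have : (r ^ n) ^ 2 = a ^ n * s' ^ n := by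
        rw [← pow_mul, mul_comm n 2, pow_mul, hrs, mul_pow]
      rw [hKφdef]
      rw [mul_pow, this]
      field_simp
      ring
    calc |f (f^[n] x) - a * f^[n] x| ≤ C * (f^[n] x) ^ 2 := h1
      _ ≤ C * (r ^ n * εs) ^ 2 := h2
      _ = Kφ * s' ^ n * a ^ (n+1) := h3
  have hsum2 : Summable (fun n : ℕ => K * r ^ n) :=
    (summable_geometric_of_lt_one hr0.le hr1).mul_left K
  have hsum1 : Summable (fun n : ℕ => Kφ * s' ^ n) :=
    (summable_geometric_of_lt_one hs0 hsmall).mul_left Kφ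
  -- uniform convergence of partial sums
  have hTUD : TendstoUniformlyOn (fun N x => ∑ n ∈ Finset.range N, D n x)
      (fun x => ∑' n, D n x) Filter.atTop S := tendstoUniformlyOn_tsum_nat hsum2 hDb
  have hTUDφ : TendstoUniformlyOn (fun N x => ∑ n ∈ Finset.range N, Dφ n x)
      (fun x => ∑' n, Dφ n x) Filter.atTop S := tendstoUniformlyOn_tsum_nat hsum1 hDφb
  have hconst : ∀ h : ℝ → ℝ, TendstoUniformlyOn (fun _ : ℕ => h) h Filter.atTop S :=
    fun h u hu => Filter.Eventually.of_forall fun n x hx => refl_mem_uniformity hu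
  set φ : ℝ → ℝ := fun x => x + ∑' n, Dφ n x with hφdef
  set ψ : ℝ → ℝ := fun x => 1 + ∑' n, D n x with hψdef
  have hTU1 : TendstoUniformlyOn (fun n x => f^[n] x / a ^ n) φ Filter.atTop S := by
    have hadd := (hconst (fun x => x)).add hTUDφ
    refine hadd.congr (Filter.Eventually.of_forall fun n => ?_)
    intro x hx
    show x + ∑ k ∈ Finset.range n, Dφ k x = f^[n] x / a ^ n
    have htel : ∑ k ∈ Finset.range n, Dφ k x = f^[n] x / a ^ n - f^[0] x / a ^ 0 := by
      simp only [hDφdef]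
      exact Finset.sum_range_sub (fun k => f^[k] x / a ^ k) n
    rw [htel]
    simp
  have hd0 : ∀ x ∈ S, derivWithin (fun y => f^[0] y / a ^ 0) S x = 1 := by
    intro x hx
    have heq : (fun y : ℝ => f^[0] y / a ^ 0) = fun y : ℝ => y := by
      funext y; simp
    rw [heq]
    exact derivWithin_id x S (hu x hx)
  have hTU2 : TendstoUniformlyOn
      (fun n x => derivWithin (fun y => f^[n] y / a ^ n) S x) ψ Filter.atTop S := by
    have hadd := (hconst (fun _ => (1:ℝ))).add hTUD
    refine hadd.congr (Filter.Eventually.of_forall fun n => ?_)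
    intro x hx
    show (1:ℝ) + ∑ k ∈ Finset.range n, D k x
        = derivWithin (fun y => f^[n] y / a ^ n) S x
    have htel : ∑ k ∈ Finset.range n, D k x
        = derivWithin (fun y => f^[n] y / a ^ n) S x
          - derivWithin (fun y => f^[0] y / a ^ 0) S x := by
      simp only [hDdef]
      exact Finset.sum_range_sub (fun k => derivWithin (fun y => f^[k] y / a ^ k) S x) n
    rw [htel, hd0 x hx]
    ring
  -- continuity facts
  have hfc : ContinuousOn f S := hf.continuousOn
  have hitc : ∀ n : ℕ, ContinuousOn (f^[n]) S := by
    intro n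
    induction n with
    | zero => simpa using continuousOn_id
    | succ n ih =>
      rw [Function.iterate_succ']
      exact hfc.comp ih (fun z hz => hiterS n z hz)
  have hGc : ∀ n : ℕ, ContinuousOn (G n) S := by
    intro n
    induction n with
    | zero =>
      simp only [hGdef, Finset.prod_range_zero]
      exact continuousOn_const
    | succ n ih =>
      have hcont : ContinuousOn (fun x => G n x * g (f^[n] x)) S :=
        ih.mul (hgcont.comp (hitc n) (fun z hz => hiterS n z hz))
      exact hcont.congr (fun x hx => by
        simp only [hGdef]
        rw [Finset.prod_range_succ])
  have hFcont : ∀ n : ℕ, ContinuousOn (fun x => G n x / a ^ n) S :=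
    fun n => (hGc n).div_const _
  have hψcont : ContinuousOn ψ S := by
    refine hTU2.continuousOn (Filter.Frequently.of_forall fun n => ?_)
    exact (hFcont n).congr (fun x hx => hdW n x hx)
  -- FTC part 2 for each n
  have key1 : ∀ n : ℕ, ∀ x ∈ S, (∫ t in (0:ℝ)..x, G n t / a ^ n) = f^[n] x / a ^ n := by
    intro n x hx
    have hx0 : (0:ℝ) ≤ x := hx.1
    have hsub : Set.Icc (0:ℝ) x ⊆ S := Set.Icc_subset_Icc le_rfl hx.2
    have hcont : ContinuousOn (fun y => f^[n] y / a ^ n) (Set.Icc 0 x) :=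
      ((hitc n).div_const _).mono hsub
    have hder : ∀ t ∈ Set.Ioo (0:ℝ) x, HasDerivWithinAt (fun y => f^[n] y / a ^ n)
        (G n t / a ^ n) (Set.Ioi t) t := by
      intro t ht
      have htS : t ∈ S := hsub ⟨ht.1.le, ht.2.le⟩
      refine (hφderiv n t htS).mono_of_mem_nhdsWithin ?_
      exact Icc_mem_nhdsGT_of_mem ⟨htS.1, lt_of_lt_of_le ht.2 hx.2⟩
    have hint : IntervalIntegrable (fun t => G n t / a ^ n) MeasureTheory.volume 0 x := by
      apply ContinuousOn.intervalIntegrable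
      rw [Set.uIcc_of_le hx0]
      exact (hFcont n).mono hsub
    have h := intervalIntegral.integral_eq_sub_of_hasDeriv_right_of_le hx0 hcont hder hint
    rw [h]
    have h0 : f^[n] (0:ℝ) = 0 := Function.iterate_fixed hf0 n
    rw [h0]
    simp
  have hψint : ∀ x ∈ S, IntervalIntegrable ψ MeasureTheory.volume 0 x := by
    intro x hx
    apply ContinuousOn.intervalIntegrable
    rw [Set.uIcc_of_le hx.1]
    exact hψcont.mono (Set.Icc_subset_Icc le_rfl hx.2)
  have key2 : ∀ x ∈ S, φ x = ∫ t in (0:ℝ)..x, ψ t := by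
    intro x hx
    have hT1 : Filter.Tendsto (fun n => f^[n] x / a ^ n) Filter.atTop (nhds (φ x)) :=
      hTU1.tendsto_at hx
    have hT2 : Filter.Tendsto (fun n : ℕ => f^[n] x / a ^ n) Filter.atTop
        (nhds (∫ t in (0:ℝ)..x, ψ t)) := by
      rw [Metric.tendsto_atTop]
      intro ε hε
      have hε' : 0 < ε / (εs + 1) := by positivity
      have hev := (Metric.tendstoUniformlyOn_iff.mp hTU2) (ε / (εs + 1)) hε'
      rw [Filter.eventually_atTop] at hev
      obtain ⟨N, hN⟩ := hev
      refine ⟨N, fun n hn => ?_⟩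
      rw [← key1 n x hx]
      have hsub : Set.Icc (0:ℝ) x ⊆ S := Set.Icc_subset_Icc le_rfl hx.2
      have hintn : IntervalIntegrable (fun t => G n t / a ^ n) MeasureTheory.volume 0 x := by
        apply ContinuousOn.intervalIntegrable
        rw [Set.uIcc_of_le hx.1]
        exact (hFcont n).mono hsub
      rw [Real.dist_eq, ← intervalIntegral.integral_sub hintn (hψint x hx)]
      have hb : ∀ t ∈ Set.uIoc (0:ℝ) x, ‖G n t / a ^ n - ψ t‖ ≤ ε / (εs + 1) := by
        intro t ht
        rw [Set.uIoc_of_le hx.1] at ht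
        have htS : t ∈ S := hsub ⟨ht.1.le, ht.2⟩
        have hdist := hN n hn t htS
        rw [hdW n t htS] at hdist
        rw [Real.dist_eq] at hdist
        rw [Real.norm_eq_abs]
        calc |G n t / a ^ n - ψ t| = |ψ t - G n t / a ^ n| := abs_sub_comm _ _
          _ ≤ ε / (εs + 1) := hdist.le
      have hnorm := intervalIntegral.norm_integral_le_of_norm_le_const hb
      rw [Real.norm_eq_abs] at hnorm
      have hxb : |x - 0| ≤ εs := by
        rw [sub_zero, abs_of_nonneg hx.1]; exact hx.2
      have hfin : ε / (εs + 1) * (εs + 1) = ε := by field_simp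
      calc |∫ t in (0:ℝ)..x, (G n t / a ^ n - ψ t)| ≤ ε / (εs + 1) * |x - 0| := hnorm
        _ ≤ ε / (εs + 1) * εs := mul_le_mul_of_nonneg_left hxb hε'.le
        _ < ε / (εs + 1) * (εs + 1) := by nlinarith
        _ = ε := hfin
    exact tendsto_nhds_unique hT1 hT2
  -- extension of ψ to all of ℝ
  have hclamp : ∀ x : ℝ, max 0 (min x εs) ∈ S := fun x =>
    ⟨le_max_left _ _, max_le hεs.le (min_le_right _ _)⟩
  set ψc : ℝ → ℝ := fun x => ψ (max 0 (min x εs)) with hψcdef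
  have hψcC : Continuous ψc := by
    simp only [hψcdef]
    exact hψcont.comp_continuous
      (continuous_const.max (continuous_id.min continuous_const)) hclamp
  have hψceq : ∀ x ∈ S, ψc x = ψ x := by
    intro x hx
    simp only [hψcdef]
    rw [min_eq_left hx.2, max_eq_right hx.1]
  set Φ : ℝ → ℝ := fun x => ∫ t in (0:ℝ)..x, ψc t with hΦdef
  have hΦd : ∀ x : ℝ, HasDerivAt Φ (ψc x) x := fun x =>
    (hψcC.integral_hasStrictDerivAt 0 x).hasDerivAt
  have hΦC1 : ContDiff ℝ 1 Φ := by
    rw [contDiff_one_iff_deriv]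
    refine ⟨fun x => (hΦd x).differentiableAt, ?_⟩
    have hdΦ : deriv Φ = ψc := funext fun x => (hΦd x).deriv
    rw [hdΦ]; exact hψcC
  have hφΦ : Set.EqOn φ Φ S := by
    intro x hx
    rw [key2 x hx]
    simp only [hΦdef]
    apply intervalIntegral.integral_congr
    intro t ht
    rw [Set.uIcc_of_le hx.1] at ht
    exact (hψceq t (Set.Icc_subset_Icc le_rfl hx.2 ht)).symm
  refine ⟨φ, ψ, hTU1, hTU2, ?_, ?_, ?_⟩
  · exact hΦC1.contDiffOn.congr (fun x hx => hφΦ hx)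
  · intro x hx
    have h1 : derivWithin φ S x = derivWithin Φ S x := derivWithin_congr hφΦ (hφΦ hx)
    have h2 : derivWithin Φ S x = ψc x := (hΦd x).hasDerivWithinAt.derivWithin (hu x hx)
    rw [h1, h2, hψceq x hx]
  · have hDzero : ∀ n : ℕ, D n 0 = 0 := by
      intro n
      have hG0 : ∀ m : ℕ, G m 0 = a ^ m := by
        intro m
        simp only [hGdef]
        have hk : ∀ k : ℕ, g (f^[k] (0:ℝ)) = a := by
          intro k; rw [Function.iterate_fixed hf0 k]; exact hf'0
        calc (∏ k ∈ Finset.range m, g (f^[k] (0:ℝ)))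
            = ∏ _k ∈ Finset.range m, a := Finset.prod_congr rfl (fun k _ => hk k)
          _ = a ^ m := by rw [Finset.prod_const, Finset.card_range]
      simp only [hDdef]
      rw [hdW (n+1) 0 h0S, hdW n 0 h0S, hG0 (n+1), hG0 n]
      rw [div_self (pow_pos ha0 (n+1)).ne', div_self (pow_pos ha0 n).ne']
      ring
    simp only [hψdef]
    rw [tsum_congr hDzero, tsum_zero]
    ring
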